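/- arXiv:1409.2757 — 3 statements merged into one kernel-verified Lean document; each statement's English description precedes it below -/
import Mathlib

section
/- The 3D spherical hypercomplex multiplication does not distribute over addition: there exist h, h', h'' ∈ ℝ³ (with all relevant planar moduli nonzero) such that h·(h'+h'') ≠ h·h' + h·h'', where the product in Cartesian coordinates is (x,y,z)·(x',y',z') = ((xx'−yy')(1 − zz'/(ρρ')), (xy'+x'y)(1 − zz'/(ρρ')), ρz' + ρ'z) with ρ = √(x²+y²), ρ' = √(x'²+y'²). -/
noncomputable def pmod (p : ℝ × ℝ × ℝ) : ℝ := Real.sqrt (p.1^2 + p.2.1^2)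

noncomputable def cmul (p q : ℝ × ℝ × ℝ) : ℝ × ℝ × ℝ :=
  ((p.1 * q.1 - p.2.1 * q.2.1) * (1 - p.2.2 * q.2.2 / (pmod p * pmod q)),
   (p.1 * q.2.1 + q.1 * p.2.1) * (1 - p.2.2 * q.2.2 / (pmod p * pmod q)),
   pmod p * q.2.2 + pmod q * p.2.2)

theorem stmt7 :
    ∃ h h' h'' : ℝ × ℝ × ℝ,
      pmod h ≠ 0 ∧ pmod h' ≠ 0 ∧ pmod h'' ≠ 0 ∧ pmod (h' + h'') ≠ 0 ∧
      cmul h (h' + h'') ≠ cmul h h' + cmul h h'' := by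
  refine ⟨(1,0,1), (1,0,0), (0,1,0), ?_, ?_, ?_, ?_, ?_⟩ <;>
    simp [pmod, cmul, Prod.ext_iff, Prod.mk_add_mk]
  have h2 : Real.sqrt 2 < 2 := by
    nlinarith [Real.sq_sqrt (by norm_num : (2:ℝ) ≥ 0), Real.sqrt_nonneg 2]
  intro h
  norm_num at h
end

section
/- The spherical hypercomplex multiplication in Cartesian form preserves the Euclidean norm multiplicatively: if h'' = h·h' with components x'' = (xx'−yy')(1 − zz'/(ρρ')), y'' = (xy'+x'y)(1 − zz'/(ρρ')), z'' = ρz' + ρ'z, where ρ = √(x²+y²) > 0 and ρ' = √(x'²+y'²) > 0, then √(x''²+y''²+z''²) = √(x²+y²+z²)·√(x'²+y'²+z'²). -/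
theorem stmt9 (x y z x' y' z' ρ ρ' x'' y'' z'' : ℝ)
    (hρ : ρ = Real.sqrt (x^2 + y^2)) (hρpos : 0 < ρ)
    (hρ' : ρ' = Real.sqrt (x'^2 + y'^2)) (hρ'pos : 0 < ρ')
    (hx'' : x'' = (x * x' - y * y') * (1 - z * z' / (ρ * ρ')))
    (hy'' : y'' = (x * y' + x' * y) * (1 - z * z' / (ρ * ρ')))
    (hz'' : z'' = ρ * z' + ρ' * z) :
    Real.sqrt (x''^2 + y''^2 + z''^2) =
      Real.sqrt (x^2 + y^2 + z^2) * Real.sqrt (x'^2 + y'^2 + z'^2) := by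
  have hρ2 : ρ^2 = x^2 + y^2 := by
    rw [hρ, Real.sq_sqrt (by positivity)]
  have hρ'2 : ρ'^2 = x'^2 + y'^2 := by
    rw [hρ', Real.sq_sqrt (by positivity)]
  have hne : ρ * ρ' ≠ 0 := by positivity
  have h2 : ρ * ρ' * (1 - z * z' / (ρ * ρ')) = ρ * ρ' - z * z' := by
    field_simp
  have key : x''^2 + y''^2 + z''^2 = (ρ^2 + z^2) * (ρ'^2 + z'^2) := by
    calc x''^2 + y''^2 + z''^2
        = ((x*x'-y*y')^2 + (x*y'+x'*y)^2) * (1 - z * z' / (ρ * ρ'))^2 + z''^2 := by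
          rw [hx'', hy'']; ring
      _ = (ρ * ρ' * (1 - z * z' / (ρ * ρ')))^2 + z''^2 := by
          have h1 : (x*x'-y*y')^2 + (x*y'+x'*y)^2 = ρ^2 * ρ'^2 := by
            rw [hρ2, hρ'2]; ring
          rw [h1]; ring
      _ = (ρ * ρ' - z * z')^2 + (ρ * z' + ρ' * z)^2 := by rw [h2, hz'']
      _ = (ρ^2 + z^2) * (ρ'^2 + z'^2) := by ring
  rw [hρ2, hρ'2] at key
  rw [key, Real.sqrt_mul (by positivity)]
end

section
/- In the first-approach 3D Mandelbrot iteration x' = (x²−y²)(1 − z²/(x²+y²)) + a, y' = 2xy(1 − z²/(x²+y²)) + b, z' = 2z√(x²+y²) + c, the norm of the quadratic part equals the square of the norm of the input: ((x²−y²)(1−z²/(x²+y²)))² + (2xy(1−z²/(x²+y²)))² + (2z√(x²+y²))² = (x²+y²+z²)², provided (x,y) ≠ (0,0). -/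
theorem stmt19 (x y z : ℝ) (h : (x, y) ≠ ((0 : ℝ), (0 : ℝ))) :
    ((x^2 - y^2) * (1 - z^2 / (x^2 + y^2)))^2
      + (2 * x * y * (1 - z^2 / (x^2 + y^2)))^2
      + (2 * z * Real.sqrt (x^2 + y^2))^2
      = (x^2 + y^2 + z^2)^2 := by
  have hxy : x ≠ 0 ∨ y ≠ 0 := by
    by_contra hc
    push_neg at hc
    exact h (by simp [hc.1, hc.2])
  have hs : (0:ℝ) < x^2 + y^2 := by
    rcases hxy with hx | hy
    · positivity
    · positivity
  have hsq : Real.sqrt (x^2 + y^2) ^ 2 = x^2 + y^2 := Real.sq_sqrt hs.le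
  have : (2 * z * Real.sqrt (x^2 + y^2))^2 = 4 * z^2 * (x^2 + y^2) := by
    rw [mul_pow, mul_pow, hsq]; ring
  rw [this]
  field_simp
  ring
end
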